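/- Let D and K̄ be m×m diagonal matrices, D with positive diagonal entries and K̄ with diagonal entries k̄₁,…,k̄ₘ > 0, and let μ > 0. Define ĝ(τ) := maxᵢ |1 - τ k̄ᵢ| + μ τ², let τ̄_s > 0 be the unique positive solution of ĝ(τ̄_s) = 1, let τ̄_o ∈ [0, τ̄_s] be a minimizer of ĝ over [0, τ̄_s], and set ρ := ĝ(τ̄_o) < 1. Let e₀ ∈ ℝᵐ and suppose that for each h = 0, 1, 2, … there is a function y_h : [0, τ̄_o] → ℝᵐ with y_h(0) = e_h and ‖y_h(τ) - (I - τ K̄) e_h‖_{D,2} ≤ μ τ² ‖e_h‖_{D,2} for all τ ∈ [0, τ̄_o], and suppose e_{h+1} is chosen so that ‖e_{h+1}‖_{D,2} ≤ ‖y_h(τ)‖_{D,2} for all τ ∈ [0, τ̄_o] (e.g., e_{h+1} = y_h(τ_h) at a time τ_h minimizing the weighted norm along the trajectory). Then for all h ≥ 0, ‖e_h‖_{D,2} ≤ ρʰ ‖e₀‖_{D,2}. -/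
import Mathlib

lemma sqrt_sum_sq_eq_norm {m : ℕ} (x : Fin m → ℝ) :
    Real.sqrt (∑ i, (x i) ^ 2) = ‖(WithLp.equiv 2 (Fin m → ℝ)).symm x‖ := by
  rw [EuclideanSpace.norm_eq]
  simp [Real.norm_eq_abs, sq_abs]

lemma sqrt_sum_sq_add_le {m : ℕ} (a b : Fin m → ℝ) :
    Real.sqrt (∑ i, (a i + b i) ^ 2) ≤
      Real.sqrt (∑ i, (a i) ^ 2) + Real.sqrt (∑ i, (b i) ^ 2) := by
  rw [sqrt_sum_sq_eq_norm, sqrt_sum_sq_eq_norm, sqrt_sum_sq_eq_norm]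
  exact norm_add_le ((WithLp.equiv 2 (Fin m → ℝ)).symm a) ((WithLp.equiv 2 (Fin m → ℝ)).symm b)

lemma sqrt_sum_sq_smul_le {m : ℕ} (c x : Fin m → ℝ) (M : ℝ) (hM0 : 0 ≤ M)
    (hM : ∀ i, |c i| ≤ M) :
    Real.sqrt (∑ i, (c i * x i) ^ 2) ≤ M * Real.sqrt (∑ i, (x i) ^ 2) := by
  have h1 : ∑ i, (c i * x i) ^ 2 ≤ M ^ 2 * ∑ i, (x i) ^ 2 := by
    rw [Finset.mul_sum]
    refine Finset.sum_le_sum fun i _ => ?_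
    rw [mul_pow]
    have : (c i) ^ 2 ≤ M ^ 2 := by
      rw [← sq_abs]
      exact pow_le_pow_left₀ (abs_nonneg _) (hM i) 2
    exact mul_le_mul_of_nonneg_right this (sq_nonneg _)
  calc Real.sqrt (∑ i, (c i * x i) ^ 2) ≤ Real.sqrt (M ^ 2 * ∑ i, (x i) ^ 2) :=
        Real.sqrt_le_sqrt h1
    _ = M * Real.sqrt (∑ i, (x i) ^ 2) := by
        rw [Real.sqrt_mul (sq_nonneg _), Real.sqrt_sq hM0]

/-- First part of Proposition 4 of the paper (online model-predictive strategy): with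
`ĝ(τ) = maxᵢ |1 - τ k̄ᵢ| + μτ²`, `τ̄_s > 0` the unique positive solution of `ĝ(τ̄_s) = 1`,
`τ̄_o` a minimizer of `ĝ` over `[0, τ̄_s]` and `ρ = ĝ(τ̄_o) < 1`, if at each step `h` the
intersample trajectory `y_h` starts at `e_h`, satisfies the remainder bound
`‖y_h(τ) - (I - τK̄)e_h‖_{D,2} ≤ μ τ² ‖e_h‖_{D,2}` on `[0, τ̄_o]`, and `e_{h+1}` is chosen
with `‖e_{h+1}‖_{D,2} ≤ ‖y_h(τ)‖_{D,2}` for all `τ ∈ [0, τ̄_o]`, then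
`‖e_h‖_{D,2} ≤ ρʰ ‖e_0‖_{D,2}` for all `h`. Here `‖x‖_{D,2} = √(∑ i, (dᵢ xᵢ)²)`. -/
theorem stmt_14 (m : ℕ) [NeZero m] (d k : Fin m → ℝ)
    (hd : ∀ i, 0 < d i) (hk : ∀ i, 0 < k i) (μ : ℝ) (hμ : 0 < μ)
    (τs τo ρ : ℝ) (hτs : 0 < τs)
    (hgs : Finset.univ.sup' Finset.univ_nonempty (fun i => |1 - τs * k i|) + μ * τs ^ 2 = 1)
    (hus : ∀ τ : ℝ, 0 < τ →
      Finset.univ.sup' Finset.univ_nonempty (fun i => |1 - τ * k i|) + μ * τ ^ 2 = 1 → τ = τs)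
    (hτo : τo ∈ Set.Icc 0 τs)
    (hmin : ∀ τ ∈ Set.Icc (0 : ℝ) τs,
      Finset.univ.sup' Finset.univ_nonempty (fun i => |1 - τo * k i|) + μ * τo ^ 2 ≤
        Finset.univ.sup' Finset.univ_nonempty (fun i => |1 - τ * k i|) + μ * τ ^ 2)
    (hρ : ρ = Finset.univ.sup' Finset.univ_nonempty (fun i => |1 - τo * k i|) + μ * τo ^ 2)
    (hρ1 : ρ < 1)
    (e : ℕ → Fin m → ℝ) (y : ℕ → ℝ → Fin m → ℝ)
    (hy0 : ∀ h : ℕ, y h 0 = e h)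
    (hrem : ∀ h : ℕ, ∀ τ ∈ Set.Icc (0 : ℝ) τo,
      Real.sqrt (∑ i, (d i * (y h τ i - (1 - τ * k i) * e h i)) ^ 2) ≤
        μ * τ ^ 2 * Real.sqrt (∑ i, (d i * e h i) ^ 2))
    (hsel : ∀ h : ℕ, ∀ τ ∈ Set.Icc (0 : ℝ) τo,
      Real.sqrt (∑ i, (d i * e (h + 1) i) ^ 2) ≤ Real.sqrt (∑ i, (d i * y h τ i) ^ 2)) :
    ∀ h : ℕ,
      Real.sqrt (∑ i, (d i * e h i) ^ 2) ≤ ρ ^ h * Real.sqrt (∑ i, (d i * e 0 i) ^ 2) := by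
  set M : ℝ := Finset.univ.sup' Finset.univ_nonempty (fun i => |1 - τo * k i|) with hM
  have hτo0 : 0 ≤ τo := hτo.1
  have hτomem : τo ∈ Set.Icc (0 : ℝ) τo := ⟨hτo0, le_refl _⟩
  have hM0 : 0 ≤ M := by
    obtain ⟨i⟩ := Finset.univ_nonempty (α := Fin m)
    exact le_trans (abs_nonneg (1 - τo * k i))
      (Finset.le_sup' (fun i => |1 - τo * k i|) (Finset.mem_univ i))
  have hρ0 : 0 ≤ ρ := by
    rw [hρ]
    have : 0 ≤ μ * τo ^ 2 := mul_nonneg hμ.le (sq_nonneg _)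
    linarith
  -- one-step bound
  have step : ∀ h : ℕ,
      Real.sqrt (∑ i, (d i * e (h + 1) i) ^ 2) ≤ ρ * Real.sqrt (∑ i, (d i * e h i) ^ 2) := by
    intro h
    have h1 := hsel h τo hτomem
    have h2 := hrem h τo hτomem
    have hlin : Real.sqrt (∑ i, (d i * ((1 - τo * k i) * e h i)) ^ 2) ≤
        M * Real.sqrt (∑ i, (d i * e h i) ^ 2) := by
      have := sqrt_sum_sq_smul_le (fun i => 1 - τo * k i) (fun i => d i * e h i) M hM0
        (fun i => Finset.le_sup' (fun i => |1 - τo * k i|) (Finset.mem_univ i))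
      calc Real.sqrt (∑ i, (d i * ((1 - τo * k i) * e h i)) ^ 2)
          = Real.sqrt (∑ i, ((1 - τo * k i) * (d i * e h i)) ^ 2) := by
            congr 1; exact Finset.sum_congr rfl fun i _ => by ring
        _ ≤ M * Real.sqrt (∑ i, (d i * e h i) ^ 2) := this
    have htri : Real.sqrt (∑ i, (d i * y h τo i) ^ 2) ≤
        Real.sqrt (∑ i, (d i * (y h τo i - (1 - τo * k i) * e h i)) ^ 2) +
        Real.sqrt (∑ i, (d i * ((1 - τo * k i) * e h i)) ^ 2) := by
      have := sqrt_sum_sq_add_le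
        (fun i => d i * (y h τo i - (1 - τo * k i) * e h i))
        (fun i => d i * ((1 - τo * k i) * e h i))
      calc Real.sqrt (∑ i, (d i * y h τo i) ^ 2)
          = Real.sqrt (∑ i, (d i * (y h τo i - (1 - τo * k i) * e h i)
              + d i * ((1 - τo * k i) * e h i)) ^ 2) := by
            congr 1; exact Finset.sum_congr rfl fun i _ => by ring
        _ ≤ _ := this
    calc Real.sqrt (∑ i, (d i * e (h + 1) i) ^ 2)
        ≤ Real.sqrt (∑ i, (d i * y h τo i) ^ 2) := h1
      _ ≤ Real.sqrt (∑ i, (d i * (y h τo i - (1 - τo * k i) * e h i)) ^ 2) +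
          Real.sqrt (∑ i, (d i * ((1 - τo * k i) * e h i)) ^ 2) := htri
      _ ≤ μ * τo ^ 2 * Real.sqrt (∑ i, (d i * e h i) ^ 2) +
          M * Real.sqrt (∑ i, (d i * e h i) ^ 2) := add_le_add h2 hlin
      _ = ρ * Real.sqrt (∑ i, (d i * e h i) ^ 2) := by rw [hρ]; ring
  intro h
  induction h with
  | zero => simp
  | succ n ih =>
    calc Real.sqrt (∑ i, (d i * e (n + 1) i) ^ 2)
        ≤ ρ * Real.sqrt (∑ i, (d i * e n i) ^ 2) := step n
      _ ≤ ρ * (ρ ^ n * Real.sqrt (∑ i, (d i * e 0 i) ^ 2)) :=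
          mul_le_mul_of_nonneg_left ih hρ0
      _ = ρ ^ (n + 1) * Real.sqrt (∑ i, (d i * e 0 i) ^ 2) := by ring
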